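/- Let {a_i} be i.i.d. real-valued random variables with partial sums S_n = a_1 + ... + a_n. Suppose the moment generating function M(r) = E[exp(r·a_1)] satisfies M(q) ≤ 1 for some q > 0. Then for any h ≥ 0, P(sup_{n≥1} S_n > h) ≤ exp(−q·h). -/

import Mathlib

open MeasureTheory ProbabilityTheory Real

private lemma sum_attach_ite {n k : ℕ} (hk : k ≤ n) (g : ℕ → ℝ) :
    ∑ i ∈ (Finset.range n).attach, (if (i : ℕ) < k then g (i : ℕ) else 0)
      = ∑ i ∈ Finset.range k, g i := by
  rw [Finset.sum_attach (Finset.range n) (fun i => if i < k then g i else 0),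
    ← Finset.sum_filter]
  congr 1
  ext i
  simp only [Finset.mem_filter, Finset.mem_range]
  omega

/-- Exponential bound on the probability that a random walk with i.i.d. increments,
whose MGF at some `q > 0` is at most 1, ever exceeds level `h ≥ 0`. -/
theorem stmt0 {Ω : Type*} [MeasurableSpace Ω] (μ : Measure Ω) [IsProbabilityMeasure μ]
    (a : ℕ → Ω → ℝ) (hmeas : ∀ i, Measurable (a i))
    (hindep : iIndepFun a μ)
    (hident : ∀ i, IdentDistrib (a i) (a 0) μ μ)
    (q : ℝ) (hq : 0 < q)
    (hint : Integrable (fun ω => Real.exp (q * a 0 ω)) μ)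
    (hM : ∫ ω, Real.exp (q * a 0 ω) ∂μ ≤ 1)
    (h : ℝ) (hh : 0 ≤ h) :
    μ {ω | ∃ n, 1 ≤ n ∧ h < ∑ i ∈ Finset.range n, a i ω}
      ≤ ENNReal.ofReal (Real.exp (-q * h)) := by
  classical
  set S : ℕ → Ω → ℝ := fun n ω => ∑ i ∈ Finset.range n, a i ω with hSdef
  set X : ℕ → Ω → ℝ := fun n ω => Real.exp (q * S n ω) with hXdef
  set C : ℕ → Set Ω := fun n => {ω | ∀ k, 1 ≤ k → k ≤ n → S k ω ≤ h} with hCdef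
  have hSmeas : ∀ n, Measurable (S n) := fun n =>
    Finset.measurable_sum _ (fun i _ => hmeas i)
  have hXmeas : ∀ n, Measurable (X n) := fun n =>
    Real.measurable_exp.comp (measurable_const.mul (hSmeas n))
  have hCmeas : ∀ n, MeasurableSet (C n) := by
    intro n
    have hEq : C n = ⋂ k ∈ Finset.Icc 1 n, {ω | S k ω ≤ h} := by
      ext ω
      simp [hCdef, Finset.mem_Icc, and_imp]
    rw [hEq]
    exact MeasurableSet.biInter (Finset.Icc 1 n).countable_toSet
      fun k _ => measurableSet_le (hSmeas k) measurable_const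
  -- measurability of the coordinate sums
  have hGsum : ∀ n k : ℕ, Measurable (fun y : ((Finset.range n : Finset ℕ)) → ℝ =>
      ∑ i ∈ (Finset.range n).attach, (if (i : ℕ) < k then y i else 0)) := by
    intro n k
    apply Finset.measurable_sum
    intro i _
    by_cases hik : (i : ℕ) < k
    · simpa [hik] using measurable_pi_apply  i
    · simp only [if_neg hik]; exact measurable_const
  have hGsum' : ∀ n : ℕ, Measurable (fun y : ((Finset.range n : Finset ℕ)) → ℝ =>
      ∑ i ∈ (Finset.range n).attach, y i) := by
    intro n
    exact Finset.measurable_sum _ fun i _ =>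
      measurable_pi_apply  i
  -- representation of X n as a function of (a i)_{i < n}
  have hrepX : ∀ n, ∃ G : (((Finset.range n : Finset ℕ)) → ℝ) → ℝ, Measurable G ∧
      X n = fun ω => G (fun i => a i ω) := by
    intro n
    refine ⟨fun y => Real.exp (q * ∑ i ∈ (Finset.range n).attach, y i),
      Real.measurable_exp.comp (measurable_const.mul (hGsum' n)), ?_⟩
    funext ω
    have : (∑ i ∈ (Finset.range n).attach, a (i : ℕ) ω) = S n ω :=
      Finset.sum_attach (Finset.range n) (fun i => a i ω)
    simp only [hXdef, this]
  -- representation of the indicator of C n times X n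
  have hrepI : ∀ n, ∃ G : (((Finset.range n : Finset ℕ)) → ℝ) → ℝ, Measurable G ∧
      Set.indicator (C n) (X n) = fun ω => G (fun i => a i ω) := by
    intro n
    refine ⟨Set.indicator
      {y : ((Finset.range n : Finset ℕ)) → ℝ | ∀ k, 1 ≤ k → k ≤ n →
        (∑ i ∈ (Finset.range n).attach, (if (i : ℕ) < k then y i else 0)) ≤ h}
      (fun y => Real.exp (q * ∑ i ∈ (Finset.range n).attach, y i)), ?_, ?_⟩
    · apply Measurable.indicator
      · exact Real.measurable_exp.comp (measurable_const.mul (hGsum' n))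
      · have hEq : {y : ((Finset.range n : Finset ℕ)) → ℝ | ∀ k, 1 ≤ k → k ≤ n →
            (∑ i ∈ (Finset.range n).attach, (if (i : ℕ) < k then y i else 0)) ≤ h}
            = ⋂ k ∈ Finset.Icc 1 n, {y | (∑ i ∈ (Finset.range n).attach,
              (if (i : ℕ) < k then y i else 0)) ≤ h} := by
          ext y
          simp [Finset.mem_Icc, and_imp]
        rw [hEq]
        exact MeasurableSet.biInter (Finset.Icc 1 n).countable_toSet
          fun k _ => measurableSet_le (hGsum n k) measurable_const
    · funext ω
      have hA : ∀ k, k ≤ n →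
          (∑ i ∈ (Finset.range n).attach, (if (i : ℕ) < k then a (i : ℕ) ω else 0)) = S k ω :=
        fun k hk => sum_attach_ite hk (fun i => a i ω)
      have hSum : (∑ i ∈ (Finset.range n).attach, a (i : ℕ) ω) = S n ω :=
        Finset.sum_attach (Finset.range n) (fun i => a i ω)
      by_cases hω : ω ∈ C n
      · rw [Set.indicator_of_mem hω, Set.indicator_of_mem]
        · simp only [hXdef, hSum]
        · intro k hk1 hkn
          rw [hA k hkn]
          exact hω k hk1 hkn
      · rw [Set.indicator_of_notMem hω, Set.indicator_of_notMem]
        intro hmem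
        exact hω (fun k hk1 hkn => by rw [← hA k hkn]; exact hmem k hk1 hkn)
  -- independence of such functions from exp(q * a n)
  have hexp_meas : Measurable (fun x : ℝ => Real.exp (q * x)) :=
    Real.measurable_exp.comp (measurable_const.mul measurable_id)
  have hindep' : ∀ (n : ℕ) (F : Ω → ℝ),
      (∃ G : (((Finset.range n : Finset ℕ)) → ℝ) → ℝ, Measurable G ∧
        F = fun ω => G (fun i => a i ω)) →
      IndepFun F (fun ω => Real.exp (q * a n ω)) μ := by
    rintro n F ⟨G, hG, rfl⟩
    have hdisj : Disjoint (Finset.range n) ({n} : Finset ℕ) := by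
      simp [Finset.disjoint_right]
    have h1 := hindep.indepFun_finset (Finset.range n) {n} hdisj hmeas
    have hψ : Measurable (fun y : (({n} : Finset ℕ)) → ℝ =>
        Real.exp (q * y ⟨n, Finset.mem_singleton_self n⟩)) :=
      hexp_meas.comp (measurable_pi_apply  _)
    exact h1.comp hG hψ
  -- integrability of exp(q * a n) and its integral bound
  have hintn : ∀ n, Integrable (fun ω => Real.exp (q * a n ω)) μ := by
    intro n
    have hid := (hident n).comp hexp_meas
    exact hid.integrable_iff.2 hint
  have hMn : ∀ n, ∫ ω, Real.exp (q * a n ω) ∂μ ≤ 1 := by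
    intro n
    have hid := (hident n).comp hexp_meas
    calc ∫ ω, Real.exp (q * a n ω) ∂μ = ∫ ω, Real.exp (q * a 0 ω) ∂μ := hid.integral_eq
      _ ≤ 1 := hM
  -- integrability of X n
  have hXint : ∀ n, Integrable (X n) μ := by
    intro n
    induction n with
    | zero =>
      have : X 0 = fun _ => (1 : ℝ) := by
        funext ω; simp [hXdef, hSdef]
      rw [this]; exact integrable_const 1
    | succ n ih =>
      have hind : IndepFun (X n) (fun ω => Real.exp (q * a n ω)) μ := hindep' n _ (hrepX n)
      have hXe : X (n + 1) = X n * fun ω => Real.exp (q * a n ω) := by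
        funext ω
        simp [hXdef, hSdef, Finset.sum_range_succ, mul_add, Real.exp_add]
      rw [hXe]
      exact hind.integrable_mul ih (hintn n)
  have hXnonneg : ∀ n ω, 0 ≤ X n ω := fun n ω => (Real.exp_pos _).le
  have hIndNonneg : ∀ (s : Set Ω) (n : ℕ), 0 ≤ ∫ ω, Set.indicator s (X n) ω ∂μ :=
    fun s n => integral_nonneg fun ω => Set.indicator_nonneg (fun x _ => hXnonneg n x) ω
  -- key supermartingale step
  have key : ∀ n, ∫ ω, Set.indicator (C n) (X (n + 1)) ω ∂μ
      ≤ ∫ ω, Set.indicator (C n) (X n) ω ∂μ := by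
    intro n
    have hEq : Set.indicator (C n) (X (n + 1))
        = (Set.indicator (C n) (X n)) * fun ω => Real.exp (q * a n ω) := by
      funext ω
      by_cases hω : ω ∈ C n
      · simp only [Pi.mul_apply, Set.indicator_of_mem hω, hXdef, hSdef,
          Finset.sum_range_succ, mul_add, Real.exp_add]
      · simp [Set.indicator_of_notMem hω]
    have hindF : IndepFun (Set.indicator (C n) (X n)) (fun ω => Real.exp (q * a n ω)) μ :=
      hindep' n _ (hrepI n)
    have hI1 : Integrable (Set.indicator (C n) (X n)) μ := (hXint n).indicator (hCmeas n)
    rw [hEq]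
    rw [hindF.integral_mul_eq_mul_integral hI1.1 (hintn n).1]
    calc (∫ ω, Set.indicator (C n) (X n) ω ∂μ) * ∫ ω, Real.exp (q * a n ω) ∂μ
        ≤ (∫ ω, Set.indicator (C n) (X n) ω ∂μ) * 1 :=
          mul_le_mul_of_nonneg_left (hMn n) (hIndNonneg _ _)
      _ = ∫ ω, Set.indicator (C n) (X n) ω ∂μ := mul_one _
  -- main induction
  have main : ∀ N, Real.exp (q * h) * (μ ((C N)ᶜ)).toReal
      + ∫ ω, Set.indicator (C N) (X N) ω ∂μ ≤ 1 := by
    intro N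
    induction N with
    | zero =>
      have h1 : C 0 = Set.univ := by
        ext ω
        simp only [hCdef, Set.mem_setOf_eq, Set.mem_univ, iff_true]
        intro k hk1 hk0
        omega
      have h2 : X 0 = fun _ => (1 : ℝ) := by
        funext ω; simp [hXdef, hSdef]
      rw [h1, h2]
      simp
    | succ N ih =>
      set B : Set Ω := C N \ C (N + 1) with hBdef
      have hCC : C (N + 1) ⊆ C N :=
        fun ω hω k hk1 hkN => hω k hk1 (hkN.trans (Nat.le_succ N))
      have hBmeas : MeasurableSet B := (hCmeas N).diff (hCmeas (N + 1))
      have hint1 : Integrable (Set.indicator (C (N + 1)) (X (N + 1))) μ :=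
        (hXint _).indicator (hCmeas _)
      have hint2 : Integrable (Set.indicator B (X (N + 1))) μ := (hXint _).indicator hBmeas
      have hsplit : Set.indicator (C N) (X (N + 1))
          = Set.indicator (C (N + 1)) (X (N + 1)) + Set.indicator B (X (N + 1)) := by
        funext ω
        by_cases h1 : ω ∈ C (N + 1)
        · have h2 : ω ∈ C N := hCC h1
          have h3 : ω ∉ B := fun hB => hB.2 h1
          simp [Set.indicator_of_mem h1, Set.indicator_of_mem h2, Set.indicator_of_notMem h3]
        · by_cases h2 : ω ∈ C N
          · have h3 : ω ∈ B := ⟨h2, h1⟩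
            simp [Set.indicator_of_notMem h1, Set.indicator_of_mem h2, Set.indicator_of_mem h3]
          · have h3 : ω ∉ B := fun hB => h2 hB.1
            simp [Set.indicator_of_notMem h1, Set.indicator_of_notMem h2,
              Set.indicator_of_notMem h3]
      have step1 : (∫ ω, Set.indicator (C (N + 1)) (X (N + 1)) ω ∂μ)
          + ∫ ω, Set.indicator B (X (N + 1)) ω ∂μ
          ≤ ∫ ω, Set.indicator (C N) (X N) ω ∂μ := by
        rw [← integral_add hint1 hint2]
        calc ∫ ω, (Set.indicator (C (N + 1)) (X (N + 1)) + Set.indicator B (X (N + 1))) ω ∂μ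
            = ∫ ω, Set.indicator (C N) (X (N + 1)) ω ∂μ := by rw [← hsplit]
          _ ≤ _ := key N
      -- lower bound on B set integral
      have hBbound : Real.exp (q * h) * (μ B).toReal
          ≤ ∫ ω, Set.indicator B (X (N + 1)) ω ∂μ := by
        have hlower : ∀ ω, Set.indicator B (fun _ => Real.exp (q * h)) ω
            ≤ Set.indicator B (X (N + 1)) ω := by
          intro ω
          by_cases hω : ω ∈ B
          · rw [Set.indicator_of_mem hω, Set.indicator_of_mem hω]
            have hlt : h < S (N + 1) ω := by
              rcases hω with ⟨hω1, hω2⟩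
              by_contra hcon
              push_neg at hcon
              refine hω2 (fun k hk1 hkN1 => ?_)
              rcases Nat.lt_succ_iff_lt_or_eq.1 (Nat.lt_succ_of_le hkN1) with hk | hk
              · exact hω1 k hk1 (Nat.lt_succ_iff.1 hk)
              · rw [hk]; exact hcon
            exact Real.exp_le_exp.2 (mul_le_mul_of_nonneg_left hlt.le hq.le)
          · rw [Set.indicator_of_notMem hω, Set.indicator_of_notMem hω]
        have hconst : ∫ ω, Set.indicator B (fun _ => Real.exp (q * h)) ω ∂μ
            = (μ B).toReal * Real.exp (q * h) := by
          rw [integral_indicator_const _ hBmeas]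
          simp [mul_comm, Measure.real]
        calc Real.exp (q * h) * (μ B).toReal
            = ∫ ω, Set.indicator B (fun _ => Real.exp (q * h)) ω ∂μ := by
              rw [hconst, mul_comm]
          _ ≤ ∫ ω, Set.indicator B (X (N + 1)) ω ∂μ :=
              integral_mono ((integrable_const _).indicator hBmeas) hint2 hlower
      have hcompl : (C (N + 1))ᶜ = (C N)ᶜ ∪ B := by
        ext ω
        simp only [Set.mem_compl_iff, Set.mem_union, hBdef, Set.mem_diff]
        tauto
      have hdisj : Disjoint ((C N)ᶜ) B :=
        Set.disjoint_left.2 fun ω hω hB => hω hB.1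
      have hmeasure : (μ ((C (N + 1))ᶜ)).toReal = (μ ((C N)ᶜ)).toReal + (μ B).toReal := by
        rw [hcompl, measure_union hdisj hBmeas,
          ENNReal.toReal_add (measure_ne_top μ _) (measure_ne_top μ _)]
      calc Real.exp (q * h) * (μ ((C (N + 1))ᶜ)).toReal
            + ∫ ω, Set.indicator (C (N + 1)) (X (N + 1)) ω ∂μ
          = Real.exp (q * h) * (μ ((C N)ᶜ)).toReal
            + (Real.exp (q * h) * (μ B).toReal
              + ∫ ω, Set.indicator (C (N + 1)) (X (N + 1)) ω ∂μ) := by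
            rw [hmeasure]; ring
        _ ≤ Real.exp (q * h) * (μ ((C N)ᶜ)).toReal
            + ((∫ ω, Set.indicator B (X (N + 1)) ω ∂μ)
              + ∫ ω, Set.indicator (C (N + 1)) (X (N + 1)) ω ∂μ) := by
            have := add_le_add_right hBbound (∫ ω, Set.indicator (C (N + 1)) (X (N + 1)) ω ∂μ)
            linarith
        _ ≤ Real.exp (q * h) * (μ ((C N)ᶜ)).toReal
            + ∫ ω, Set.indicator (C N) (X N) ω ∂μ := by linarith [step1]
        _ ≤ 1 := ih
  -- conclude per-N bound
  have hbound : ∀ N, μ ((C N)ᶜ) ≤ ENNReal.ofReal (Real.exp (-q * h)) := by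
    intro N
    have h1 := main N
    have h2 := hIndNonneg (C N) N
    have hqh : (0 : ℝ) < Real.exp (q * h) := Real.exp_pos _
    have h3 : (μ ((C N)ᶜ)).toReal ≤ Real.exp (-q * h) := by
      rw [neg_mul, Real.exp_neg, inv_eq_one_div, le_div_iff₀ hqh]
      linarith
    calc μ ((C N)ᶜ) = ENNReal.ofReal ((μ ((C N)ᶜ)).toReal) :=
          (ENNReal.ofReal_toReal (measure_ne_top μ _)).symm
      _ ≤ ENNReal.ofReal (Real.exp (-q * h)) := ENNReal.ofReal_le_ofReal h3
  -- rewrite the target set as the monotone union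
  have hset : {ω | ∃ n, 1 ≤ n ∧ h < ∑ i ∈ Finset.range n, a i ω} = ⋃ N, ((C N)ᶜ) := by
    ext ω
    simp only [Set.mem_setOf_eq, Set.mem_iUnion, Set.mem_compl_iff, hCdef]
    constructor
    · rintro ⟨n, hn1, hn2⟩
      exact ⟨n, fun hcon => absurd hn2 (not_lt.2 (hcon n hn1 le_rfl))⟩
    · rintro ⟨N, hN⟩
      push_neg at hN
      obtain ⟨k, hk1, _, hk3⟩ := hN
      exact ⟨k, hk1, hk3⟩
  rw [hset]
  have hmono : Monotone (fun N => (C N)ᶜ) := fun m n hmn =>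
    Set.compl_subset_compl.2 (fun ω hω k hk1 hkm => hω k hk1 (hkm.trans hmn))
  rw [hmono.directed_le.measure_iUnion]
  exact iSup_le hbound
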